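/- Let H be a finite-dimensional real inner product space, let A be a self-adjoint operator on H with A ≥ δI for some δ > 0, let β ∈ (0,1), and let κ > 1. Then A^{−β} = (sin(πβ)/((1−β)π)) ∫₀¹ (1−η)^{κ−1} (1 + (κ(1−β)/β − 1) η) (η^{1/(1−β)} I + (1−η)^{κ/β} A)⁻¹ dη, where A^{−β} is defined by the spectral theorem and the integral is a convergent operator-valued (Bochner) integral over (0,1). -/

import Mathlib

open scoped RealInnerProductSpace
open MeasureTheory

open Set

lemma beta_aux {β : ℝ} (hβ0 : 0 < β) (hβ1 : β < 1) :
    ∫ x in Set.Ioo (0:ℝ) 1, x ^ (-β) * (1-x) ^ (β-1) = Real.pi / Real.sin (Real.pi * β) := by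
  have hu : 0 < ((((1:ℝ) - β : ℝ)) : ℂ).re := by simp [sub_pos.2 hβ1]
  have hv : 0 < ((β : ℝ) : ℂ).re := by simpa using hβ0
  have h1 := Complex.Gamma_mul_Gamma_eq_betaIntegral hu hv
  have hsum : (((1:ℝ) - β : ℝ) : ℂ) + ((β : ℝ) : ℂ) = 1 := by push_cast; ring
  rw [hsum, Complex.Gamma_one, one_mul] at h1
  have h2 : Complex.betaIntegral (((1:ℝ) - β : ℝ) : ℂ) ((β : ℝ) : ℂ)
      = ((∫ x in (0:ℝ)..1, x ^ (-β) * (1-x) ^ (β-1) : ℝ) : ℂ) := by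
    rw [Complex.betaIntegral, ← intervalIntegral.integral_ofReal]
    apply intervalIntegral.integral_congr
    intro x hx
    rw [Set.uIcc_of_le zero_le_one] at hx
    have hx0 : (0:ℝ) ≤ x := hx.1
    have hx1 : (0:ℝ) ≤ 1 - x := by linarith [hx.2]
    have e1 : (((1:ℝ) - β : ℝ) : ℂ) - 1 = ((-β : ℝ) : ℂ) := by push_cast; ring
    have e2 : ((β : ℝ) : ℂ) - 1 = ((β - 1 : ℝ) : ℂ) := by push_cast; ring
    show (x:ℂ) ^ ((((1:ℝ) - β : ℝ) : ℂ) - 1) * (1 - (x:ℂ)) ^ (((β : ℝ) : ℂ) - 1)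
        = ((x ^ (-β) * (1 - x) ^ (β - 1) : ℝ) : ℂ)
    rw [e1, e2, ← Complex.ofReal_cpow hx0, ← Complex.ofReal_one, ← Complex.ofReal_sub,
      ← Complex.ofReal_cpow hx1]
    push_cast
    ring
  rw [h2, Complex.Gamma_ofReal, Complex.Gamma_ofReal, ← Complex.ofReal_mul] at h1
  have h3 : Real.Gamma (1 - β) * Real.Gamma β = ∫ x in (0:ℝ)..1, x ^ (-β) * (1-x) ^ (β-1) :=
    Complex.ofReal_injective h1
  rw [intervalIntegral.integral_of_le zero_le_one, integral_Ioc_eq_integral_Ioo] at h3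
  rw [← h3, mul_comm, Real.Gamma_mul_Gamma_one_sub]

lemma scalar_id {β κ l : ℝ} (hβ0 : 0 < β) (hβ1 : β < 1) (hκ : 1 < κ) (hl : 0 < l) :
    ∫ η in Set.Ioo (0:ℝ) 1,
        ((1-η) ^ (κ-1) * (1 + (κ*(1-β)/β - 1)*η)) * ((η ^ (1/(1-β)) + (1-η) ^ (κ/β) * l)⁻¹)
      = (1-β) * l ^ (-β) * (Real.pi / Real.sin (Real.pi * β)) := by
  have hβ' : (1:ℝ) - β ≠ 0 := by linarith
  have h1β : (0:ℝ) < 1 - β := by linarith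
  set p : ℝ := 1/(1-β) with hp_def
  set q : ℝ := κ/β with hq_def
  set c : ℝ := κ*(1-β)/β - 1 with hc_def
  have hp1 : 1 < p := by rw [hp_def, lt_div_iff₀ h1β]; nlinarith
  have hq1 : 1 < q := by rw [hq_def, lt_div_iff₀ hβ0]; nlinarith
  have hp0 : 0 < p := by linarith
  have hq0 : 0 < q := by linarith
  set D : ℝ → ℝ := fun η => η ^ p + (1-η) ^ q * l with hD_def
  set X : ℝ → ℝ := fun η => η ^ p / D η with hX_def
  set X' : ℝ → ℝ := fun η =>
    l * ((1-η) ^ (q-1) * (η ^ (p-1) * (p*(1-η) + q*η))) / (D η)^2 with hX'_def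
  have hDpos : ∀ η ∈ Icc (0:ℝ) 1, 0 < D η := by
    intro η hη
    rcases hη.1.eq_or_lt with h | h
    · simp only [hD_def, ← h, Real.zero_rpow hp0.ne', sub_zero, Real.one_rpow, zero_add, one_mul]
      exact hl
    · exact add_pos_of_pos_of_nonneg (Real.rpow_pos_of_pos h p)
        (mul_nonneg (Real.rpow_nonneg (by linarith [hη.2]) q) hl.le)
  have hNcont : Continuous fun η : ℝ => η ^ p := by
    rw [continuous_iff_continuousAt]
    intro x; exact Real.continuousAt_rpow_const x p (Or.inr hp0.le)
  have hMcont : Continuous fun η : ℝ => (1-η) ^ q := by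
    have : Continuous fun η : ℝ => η ^ q := by
      rw [continuous_iff_continuousAt]
      intro x; exact Real.continuousAt_rpow_const x q (Or.inr hq0.le)
    exact this.comp (continuous_const.sub continuous_id)
  have hDcont : Continuous D := hNcont.add (hMcont.mul continuous_const)
  have hXcont : ContinuousOn X (Icc 0 1) :=
    hNcont.continuousOn.div hDcont.continuousOn (fun x hx => (hDpos x hx).ne')
  have hderiv : ∀ η ∈ Ioo (0:ℝ) 1, HasDerivWithinAt X (X' η) (Ioo 0 1) η := by
    intro η hη
    have hu : (0:ℝ) < η := hη.1
    have hv : (0:ℝ) < 1 - η := by linarith [hη.2]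
    have hN : HasDerivAt (fun s : ℝ => s ^ p) (p * η ^ (p-1)) η :=
      Real.hasDerivAt_rpow_const (Or.inl hu.ne')
    have hone : HasDerivAt (fun s : ℝ => 1 - s) (-1) η := by
      exact (hasDerivAt_id' η).const_sub 1
    have hM : HasDerivAt (fun s : ℝ => (1-s) ^ q) (q * (1-η) ^ (q-1) * (-1)) η :=
      (Real.hasDerivAt_rpow_const (p := q) (Or.inl hv.ne')).comp η hone
    have hD' : HasDerivAt D (p * η ^ (p-1) + q * (1-η) ^ (q-1) * (-1) * l) η :=
      hN.add (hM.mul_const l)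
    have hX : HasDerivAt X
        ((p * η ^ (p-1) * D η - η ^ p * (p * η ^ (p-1) + q * (1-η) ^ (q-1) * (-1) * l))
          / (D η)^2) η := hN.div hD' (hDpos η (Ioo_subset_Icc_self hη)).ne'
    have hnum : X' η =
        (p * η ^ (p-1) * D η - η ^ p * (p * η ^ (p-1) + q * (1-η) ^ (q-1) * (-1) * l))
          / (D η)^2 := by
      have hup : η ^ p = η ^ (p-1) * η := by
        rw [show p = (p-1)+1 by ring, Real.rpow_add_one hu.ne']; ring_nf
      have hvq : (1-η) ^ q = (1-η) ^ (q-1) * (1-η) := by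
        rw [show q = (q-1)+1 by ring, Real.rpow_add_one hv.ne']; ring_nf
      simp only [hX'_def, hD_def]
      rw [hup, hvq]; ring
    rw [hnum]
    exact hX.hasDerivWithinAt
  have hinj : InjOn X (Ioo 0 1) := by
    have hmono : StrictMonoOn X (Ioo 0 1) := by
      intro x hx y hy hxy
      have hDx := hDpos x (Ioo_subset_Icc_self hx)
      have hDy := hDpos y (Ioo_subset_Icc_self hy)
      simp only [hX_def]
      rw [div_lt_div_iff₀ hDx hDy]
      simp only [hD_def]
      have h1 : x ^ p < y ^ p := Real.rpow_lt_rpow hx.1.le hxy hp0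
      have h2 : (1-y) ^ q < (1-x) ^ q :=
        Real.rpow_lt_rpow (by linarith [hy.2]) (by linarith) hq0
      have h3 : (0:ℝ) ≤ x ^ p := Real.rpow_nonneg hx.1.le p
      have h4 : (0:ℝ) < y ^ p := Real.rpow_pos_of_pos hy.1 p
      have h5 : (0:ℝ) ≤ (1-y) ^ q := Real.rpow_nonneg (by linarith [hy.2]) q
      have h6 : x ^ p * (1-y) ^ q < y ^ p * (1-x) ^ q :=
        lt_of_le_of_lt (mul_le_mul_of_nonneg_right h1.le h5) (mul_lt_mul_of_pos_left h2 h4)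
      nlinarith [mul_lt_mul_of_pos_right h6 hl]
    exact hmono.injOn
  have himg : X '' Ioo 0 1 = Ioo 0 1 := by
    apply Subset.antisymm
    · rintro _ ⟨η, hη, rfl⟩
      have hu : (0:ℝ) < η := hη.1
      have hv : (0:ℝ) < 1 - η := by linarith [hη.2]
      have hD := hDpos η (Ioo_subset_Icc_self hη)
      constructor
      · exact div_pos (Real.rpow_pos_of_pos hu p) hD
      · rw [div_lt_one hD]
        simp only [hD_def]
        nlinarith [Real.rpow_pos_of_pos hv q]
    · have h0 : X 0 = 0 := by
        simp [hX_def, hD_def, Real.zero_rpow hp0.ne', Real.zero_rpow hq0.ne']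
      have h1 : X 1 = 1 := by
        simp [hX_def, hD_def, Real.zero_rpow hp0.ne', Real.zero_rpow hq0.ne']
      have := intermediate_value_Ioo zero_le_one hXcont
      rw [h0, h1] at this
      exact this
  have hchg := integral_image_eq_integral_abs_deriv_smul measurableSet_Ioo hderiv hinj
    (fun x => x ^ (-β) * (1-x) ^ (β-1))
  rw [himg, beta_aux hβ0 hβ1] at hchg
  have hpoint : ∀ η ∈ Ioo (0:ℝ) 1,
      |X' η| • ((X η) ^ (-β) * (1 - X η) ^ (β-1))
        = (l ^ β/(1-β)) * (((1-η) ^ (κ-1) * (1 + c*η)) * (D η)⁻¹) := by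
    intro η hη
    have hu : (0:ℝ) < η := hη.1
    have hv : (0:ℝ) < 1 - η := by linarith [hη.2]
    have hD := hDpos η (Ioo_subset_Icc_self hη)
    have hN := Real.rpow_pos_of_pos hu p
    have hM := Real.rpow_pos_of_pos hv q
    have hX'pos : 0 < X' η := by
      apply div_pos
      · apply mul_pos hl
        apply mul_pos (Real.rpow_pos_of_pos hv _)
        apply mul_pos (Real.rpow_pos_of_pos hu _)
        nlinarith
      · positivity
    rw [abs_of_pos hX'pos, smul_eq_mul]
    -- X η ^ (-β) = η ^ (p * -β) * D η ^ β
    have hXval : (X η) ^ (-β) = η ^ (p * -β) * (D η) ^ β := by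
      simp only [hX_def]
      rw [Real.div_rpow (Real.rpow_nonneg hu.le p) hD.le, ← Real.rpow_mul hu.le,
        Real.rpow_neg hD.le, div_inv_eq_mul]
    have h1X : 1 - X η = (1-η) ^ q * l / D η := by
      simp only [hX_def, hD_def]
      field_simp
      ring
    have h1Xval : (1 - X η) ^ (β-1) = (1-η) ^ (q*(β-1)) * l ^ (β-1) * (D η) ^ (1-β) := by
      rw [h1X, Real.div_rpow (by positivity) hD.le,
        Real.mul_rpow (Real.rpow_nonneg hv.le q) hl.le, ← Real.rpow_mul hv.le,
        show (β - 1 : ℝ) = -(1-β) by ring, Real.rpow_neg hD.le, div_inv_eq_mul]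
    rw [hXval, h1Xval]
    have hqβ : q * β = κ := by rw [hq_def]; field_simp
    have hpβ : p * (1-β) = 1 := by rw [hp_def]; field_simp
    have hvv : (1-η) ^ (q-1) * (1-η) ^ (q*(β-1)) = (1-η) ^ (κ-1) := by
      rw [← Real.rpow_add hv, show q - 1 + q*(β-1) = q*β - 1 by ring, hqβ]
    have huu : η ^ (p-1) * η ^ (p * -β) = 1 := by
      rw [← Real.rpow_add hu, show p - 1 + p * -β = p*(1-β) - 1 by ring, hpβ, sub_self,
        Real.rpow_zero]
    have hll : l ^ (β-1) * l = l ^ β := by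
      rw [← Real.rpow_add_one hl.ne' (β-1)]; ring_nf
    have hDD : (D η) ^ β * (D η) ^ (1-β) = D η := by
      rw [← Real.rpow_add hD, show β + (1-β) = 1 by ring, Real.rpow_one]
    have hpq : p*(1-η) + q*η = (1 + c*η)/(1-β) := by
      rw [hp_def, hq_def, hc_def]; field_simp; ring
    calc X' η * (η ^ (p * -β) * (D η) ^ β * ((1-η) ^ (q*(β-1)) * l ^ (β-1) * (D η) ^ (1-β)))
        = ((1-η) ^ (q-1) * (1-η) ^ (q*(β-1))) * (η ^ (p-1) * η ^ (p * -β)) *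
          (l ^ (β-1) * l) * ((D η) ^ β * (D η) ^ (1-β)) / (D η)^2 * (p*(1-η) + q*η) := by
          simp only [hX'_def]; ring
      _ = (1-η) ^ (κ-1) * 1 * l ^ β * D η / (D η)^2 * (p*(1-η) + q*η) := by
          rw [hvv, huu, hll, hDD]
      _ = (l ^ β/(1-β)) * (((1-η) ^ (κ-1) * (1 + c*η)) * (D η)⁻¹) := by
          rw [hpq]; field_simp
  rw [setIntegral_congr_fun measurableSet_Ioo hpoint, integral_const_mul] at hchg
  have hlb : (0:ℝ) < l ^ β := Real.rpow_pos_of_pos hl β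
  have hlneg : l ^ (-β) = (l ^ β)⁻¹ := by
    rw [Real.rpow_neg hl.le]
  have hIeq : (∫ η in Set.Ioo (0:ℝ) 1,
        ((1-η) ^ (κ-1) * (1 + c*η)) * ((η ^ p + (1-η) ^ q * l)⁻¹))
      = ∫ η in Set.Ioo (0:ℝ) 1, ((1-η) ^ (κ-1) * (1 + c*η)) * (D η)⁻¹ := by
    simp only [hD_def]
  rw [hIeq, hlneg]
  set I := ∫ η in Set.Ioo (0:ℝ) 1, ((1-η) ^ (κ-1) * (1 + c*η)) * (D η)⁻¹ with hI
  have h2 : I = ((1-β)/l ^ β) * (l ^ β/(1-β) * I) := by field_simp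
  rw [h2, ← hchg]
  ring

lemma inv_aux {H : Type*} [NormedAddCommGroup H] [InnerProductSpace ℝ H] [FiniteDimensional ℝ H]
    (A : H →L[ℝ] H) (δ : ℝ) (hδ : 0 < δ)
    (hAδ : ∀ x : H, δ * ‖x‖ ^ 2 ≤ ⟪A x, x⟫)
    {n : ℕ} (e : OrthonormalBasis (Fin n) ℝ H) (lam : Fin n → ℝ)
    (hAe : ∀ k, A (e k) = lam k • e k)
    (hlam : ∀ k, δ ≤ lam k)
    (a b : ℝ) (ha : 0 < a) (hb : 0 < b) :
    IsUnit (a • (1 : H →L[ℝ] H) + b • A) ∧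
    (∀ k, Ring.inverse (a • (1 : H →L[ℝ] H) + b • A) (e k) = (a + b * lam k)⁻¹ • e k) ∧
      ‖Ring.inverse (a • (1 : H →L[ℝ] H) + b • A)‖ ≤ (a + b * δ)⁻¹ := by
  set T : H →L[ℝ] H := a • (1 : H →L[ℝ] H) + b • A with hT_def
  set C : H →L[ℝ] H :=
    LinearMap.toContinuousLinearMap (e.toBasis.constr ℝ fun k => (a + b * lam k)⁻¹ • e k)
    with hC_def
  have hco : ∀ k, (0:ℝ) < a + b * lam k := fun k => by nlinarith [hlam k]
  have hCe : ∀ k, C (e k) = (a + b * lam k)⁻¹ • e k := by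
    intro k
    have : C (e.toBasis k) = (a + b * lam k)⁻¹ • e k := by
      simp only [hC_def, LinearMap.coe_toContinuousLinearMap']
      exact e.toBasis.constr_basis ℝ _ k
    simpa [OrthonormalBasis.coe_toBasis] using this
  have hTe : ∀ k, T (e k) = (a + b * lam k) • e k := by
    intro k
    simp [hT_def, ContinuousLinearMap.add_apply, ContinuousLinearMap.smul_apply, hAe k,
      smul_smul, add_smul, mul_comm]
  have hTC : T * C = 1 := by
    apply ContinuousLinearMap.coe_injective
    apply Module.Basis.ext e.toBasis
    intro k
    simp only [OrthonormalBasis.coe_toBasis, ContinuousLinearMap.coe_coe,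
      ContinuousLinearMap.mul_apply, ContinuousLinearMap.one_apply]
    rw [hCe k, _root_.map_smul, hTe k, smul_smul, inv_mul_cancel₀ (hco k).ne', one_smul]
  have hCT : C * T = 1 := by
    apply ContinuousLinearMap.coe_injective
    apply Module.Basis.ext e.toBasis
    intro k
    simp only [OrthonormalBasis.coe_toBasis, ContinuousLinearMap.coe_coe,
      ContinuousLinearMap.mul_apply, ContinuousLinearMap.one_apply]
    rw [hTe k, _root_.map_smul, hCe k, smul_smul, mul_inv_cancel₀ (hco k).ne', one_smul]
  have hinv : Ring.inverse T = C := by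
    have := Ring.inverse_unit (⟨T, C, hTC, hCT⟩ : (H →L[ℝ] H)ˣ)
    simpa using this
  refine ⟨⟨⟨T, C, hTC, hCT⟩, rfl⟩, fun k => by rw [hinv, hCe k], ?_⟩
  rw [hinv]
  have habδ : (0:ℝ) < a + b * δ := by nlinarith
  apply ContinuousLinearMap.opNorm_le_bound C (by positivity)
  intro x
  set y := C x with hy
  have hTy : T y = x := by
    have := congrArg (fun (S : H →L[ℝ] H) => S x) hTC
    simpa [ContinuousLinearMap.mul_apply] using this
  have hcoer : (a + b * δ) * ‖y‖ ^ 2 ≤ ⟪T y, y⟫ := by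
    have h1 : ⟪T y, y⟫ = a * ⟪y, y⟫ + b * ⟪A y, y⟫ := by
      simp [hT_def, ContinuousLinearMap.add_apply, ContinuousLinearMap.smul_apply,
        inner_add_left, real_inner_smul_left]
    have h2 : δ * ‖y‖ ^ 2 ≤ ⟪A y, y⟫ := hAδ y
    rw [h1, real_inner_self_eq_norm_sq]
    nlinarith
  rw [hTy] at hcoer
  have hCS : ⟪x, y⟫ ≤ ‖x‖ * ‖y‖ := real_inner_le_norm x y
  rcases eq_or_lt_of_le (norm_nonneg y) with h0 | h0
  · rw [← h0]
    positivity
  · have : (a + b * δ) * ‖y‖ ≤ ‖x‖ := by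
      have := hcoer.trans hCS
      nlinarith
    rw [inv_mul_eq_div, le_div_iff₀ habδ]
    linarith [this]

/-- Integral representation of `A^{−β}` with integration over a finite interval and
a smoothness parameter `κ > 1`:
`A^{−β} = (sin(πβ)/((1−β)π)) ∫₀¹ (1−η)^{κ−1} (1 + (κ(1−β)/β − 1)η)
(η^{1/(1−β)} I + (1−η)^{κ/β} A)⁻¹ dη`. -/
theorem fractional_power_integral_representation_kappa
    {H : Type*} [NormedAddCommGroup H] [InnerProductSpace ℝ H] [FiniteDimensional ℝ H]
    (A : H →L[ℝ] H)
    (hAsym : ∀ x y : H, ⟪A x, y⟫ = ⟪x, A y⟫)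
    (δ : ℝ) (hδ : 0 < δ)
    (hAδ : ∀ x : H, δ * ‖x‖ ^ 2 ≤ ⟪A x, x⟫)
    (β : ℝ) (hβ : β ∈ Set.Ioo (0 : ℝ) 1)
    (κ : ℝ) (hκ : 1 < κ)
    -- spectral decomposition of `A` and the spectral definition of `A^{−β}`
    (n : ℕ) (e : OrthonormalBasis (Fin n) ℝ H) (lam : Fin n → ℝ)
    (hAe : ∀ k, A (e k) = lam k • e k)
    (Aneg : H →L[ℝ] H)
    (hAneg : ∀ k, Aneg (e k) = (lam k ^ (-β)) • e k) :
    IntegrableOn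
        (fun η : ℝ => ((1 - η) ^ (κ - 1) * (1 + (κ * (1 - β) / β - 1) * η)) •
          Ring.inverse ((η ^ (1 / (1 - β))) • (1 : H →L[ℝ] H) +
            ((1 - η) ^ (κ / β)) • A))
        (Set.Ioo 0 1) volume ∧
      Aneg = (Real.sin (Real.pi * β) / ((1 - β) * Real.pi)) •
        ∫ η in Set.Ioo (0 : ℝ) 1,
          ((1 - η) ^ (κ - 1) * (1 + (κ * (1 - β) / β - 1) * η)) •
            Ring.inverse ((η ^ (1 / (1 - β))) • (1 : H →L[ℝ] H) +
              ((1 - η) ^ (κ / β)) • A) := by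
  obtain ⟨hβ0, hβ1⟩ := hβ
  have h1β : (0:ℝ) < 1 - β := by linarith
  have hβ' : (1:ℝ) - β ≠ 0 := h1β.ne'
  have hp0 : (0:ℝ) < 1/(1-β) := by positivity
  have hκ0 : (0:ℝ) < κ := by linarith
  have hq0 : (0:ℝ) < κ/β := by positivity
  have hlam : ∀ k, δ ≤ lam k := by
    intro k
    have h1 := hAδ (e k)
    have hnorm : ‖e k‖ = 1 := e.orthonormal.1 k
    rw [hAe k, real_inner_smul_left, real_inner_self_eq_norm_sq, hnorm] at h1
    simpa using h1
  set Fn : ℝ → (H →L[ℝ] H) := fun η : ℝ =>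
    ((1 - η) ^ (κ - 1) * (1 + (κ * (1 - β) / β - 1) * η)) •
      Ring.inverse ((η ^ (1 / (1 - β))) • (1 : H →L[ℝ] H) +
        ((1 - η) ^ (κ / β)) • A) with hFn_def
  have hkey : ∀ η ∈ Set.Ioo (0:ℝ) 1,
      IsUnit ((η ^ (1 / (1 - β))) • (1 : H →L[ℝ] H) + ((1 - η) ^ (κ / β)) • A) ∧
      (∀ k, Ring.inverse ((η ^ (1 / (1 - β))) • (1 : H →L[ℝ] H) +
              ((1 - η) ^ (κ / β)) • A) (e k)
          = (η ^ (1 / (1 - β)) + (1 - η) ^ (κ / β) * lam k)⁻¹ • e k) ∧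
      ‖Ring.inverse ((η ^ (1 / (1 - β))) • (1 : H →L[ℝ] H) + ((1 - η) ^ (κ / β)) • A)‖
          ≤ (η ^ (1 / (1 - β)) + (1 - η) ^ (κ / β) * δ)⁻¹ :=
    fun η hη => inv_aux A δ hδ hAδ e lam hAe hlam _ _
      (Real.rpow_pos_of_pos hη.1 _) (Real.rpow_pos_of_pos (by linarith [hη.2]) _)
  set m : ℝ := min (((1:ℝ)/2) ^ (1/(1-β))) (((1:ℝ)/2) ^ (κ/β) * δ) with hm_def
  have hm : 0 < m := by
    apply lt_min
    · positivity
    · positivity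
  set c : ℝ := κ * (1 - β) / β - 1 with hc_def
  have hbound : ∀ η ∈ Set.Ioo (0:ℝ) 1, ‖Fn η‖ ≤ (1 + |c|) * m⁻¹ := by
    intro η hη
    have hu : (0:ℝ) < η := hη.1
    have hv : (0:ℝ) < 1 - η := by linarith [hη.2]
    rw [hFn_def]
    show ‖((1 - η) ^ (κ - 1) * (1 + c * η)) •
        Ring.inverse ((η ^ (1 / (1 - β))) • (1 : H →L[ℝ] H) + ((1 - η) ^ (κ / β)) • A)‖
      ≤ (1 + |c|) * m⁻¹
    rw [(norm_smul ((1 - η) ^ (κ - 1) * (1 + c * η))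
      (Ring.inverse ((η ^ (1 / (1 - β))) • (1 : H →L[ℝ] H) + ((1 - η) ^ (κ / β)) • A))).trans
      (by rw [Real.norm_eq_abs])]
    have hw : |(1 - η) ^ (κ - 1) * (1 + c * η)| ≤ 1 + |c| := by
      rw [abs_mul]
      have h1 : |(1 - η) ^ (κ - 1)| ≤ 1 := by
        rw [abs_of_nonneg (Real.rpow_nonneg hv.le _)]
        exact Real.rpow_le_one hv.le (by linarith [hη.2]) (by linarith)
      have h2 : |1 + c * η| ≤ 1 + |c| := by
        calc |1 + c * η| ≤ |1| + |c * η| := abs_add_le _ _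
          _ = 1 + |c| * |η| := by rw [abs_one, abs_mul]
          _ ≤ 1 + |c| * 1 := by
              have : |η| ≤ 1 := by rw [abs_of_pos hu]; linarith [hη.2]
              nlinarith [abs_nonneg c]
          _ = 1 + |c| := by ring
      calc |(1 - η) ^ (κ - 1)| * |1 + c * η| ≤ 1 * (1 + |c|) := by
            apply mul_le_mul h1 h2 (abs_nonneg _) zero_le_one
        _ = 1 + |c| := by ring
    have hRn : ‖Ring.inverse ((η ^ (1 / (1 - β))) • (1 : H →L[ℝ] H) +
        ((1 - η) ^ (κ / β)) • A)‖ ≤ m⁻¹ := by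
      refine le_trans (hkey η hη).2.2 ?_
      apply inv_anti₀ hm
      rcases le_or_gt η (1/2) with hhalf | hhalf
      · have hb : ((1:ℝ)/2) ^ (κ/β) ≤ (1 - η) ^ (κ/β) :=
          Real.rpow_le_rpow (by norm_num) (by linarith) hq0.le
        have ha : (0:ℝ) < η ^ (1/(1-β)) := Real.rpow_pos_of_pos hu _
        calc m ≤ ((1:ℝ)/2) ^ (κ/β) * δ := min_le_right _ _
          _ ≤ (1 - η) ^ (κ/β) * δ := by nlinarith
          _ ≤ η ^ (1/(1-β)) + (1 - η) ^ (κ/β) * δ := by linarith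
      · have ha : ((1:ℝ)/2) ^ (1/(1-β)) ≤ η ^ (1/(1-β)) :=
          Real.rpow_le_rpow (by norm_num) (by linarith) hp0.le
        have hb : (0:ℝ) < (1 - η) ^ (κ/β) * δ :=
          mul_pos (Real.rpow_pos_of_pos hv _) hδ
        calc m ≤ ((1:ℝ)/2) ^ (1/(1-β)) := min_le_left _ _
          _ ≤ η ^ (1/(1-β)) + (1 - η) ^ (κ/β) * δ := by linarith
    exact mul_le_mul hw hRn (norm_nonneg _) (by positivity)
  have hmeas : AEStronglyMeasurable Fn (volume.restrict (Set.Ioo 0 1)) := by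
    apply ContinuousOn.aestronglyMeasurable _ measurableSet_Ioo
    have hNc : Continuous fun η : ℝ => η ^ (1/(1-β)) := by
      rw [continuous_iff_continuousAt]
      intro x; exact Real.continuousAt_rpow_const x _ (Or.inr hp0.le)
    have hMc : Continuous fun η : ℝ => (1 - η) ^ (κ/β) := by
      have h : Continuous fun η : ℝ => η ^ (κ/β) := by
        rw [continuous_iff_continuousAt]
        intro x; exact Real.continuousAt_rpow_const x _ (Or.inr hq0.le)
      exact h.comp (continuous_const.sub continuous_id)
    have hwc : Continuous fun η : ℝ => (1 - η) ^ (κ - 1) * (1 + c * η) := by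
      have h : Continuous fun η : ℝ => η ^ (κ - 1) := by
        rw [continuous_iff_continuousAt]
        intro x; exact Real.continuousAt_rpow_const x _ (Or.inr (by linarith))
      exact (h.comp (continuous_const.sub continuous_id)).mul
        (continuous_const.add (continuous_const.mul continuous_id))
    have hTc : Continuous fun η : ℝ =>
        (η ^ (1 / (1 - β))) • (1 : H →L[ℝ] H) + ((1 - η) ^ (κ / β)) • A :=
      (hNc.smul continuous_const).add (hMc.smul continuous_const)
    have hRc : ContinuousOn (fun η : ℝ => Ring.inverse
        ((η ^ (1 / (1 - β))) • (1 : H →L[ℝ] H) + ((1 - η) ^ (κ / β)) • A)) (Set.Ioo 0 1) := by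
      intro η hη
      have hunit := (hkey η hη).1
      have h2 : ContinuousAt Ring.inverse
          ((η ^ (1 / (1 - β))) • (1 : H →L[ℝ] H) + ((1 - η) ^ (κ / β)) • A) := by
        have := NormedRing.inverse_continuousAt hunit.unit
        rwa [IsUnit.unit_spec] at this
      exact (ContinuousAt.comp (f := fun η : ℝ =>
        (η ^ (1 / (1 - β))) • (1 : H →L[ℝ] H) + ((1 - η) ^ (κ / β)) • A) (x := η)
        h2 hTc.continuousAt).continuousWithinAt
    exact hwc.continuousOn.smul hRc
  have hInt : IntegrableOn Fn (Set.Ioo 0 1) volume := by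
    apply Integrable.mono' (g := fun _ => (1 + |c|) * m⁻¹) _ hmeas
      ((ae_restrict_iff' measurableSet_Ioo).2 (Filter.Eventually.of_forall hbound))
    exact integrableOn_const (by rw [Real.volume_Ioo]; exact ENNReal.ofReal_ne_top) enorm_ne_top
  refine ⟨hInt, ?_⟩
  have hsin : 0 < Real.sin (Real.pi * β) := by
    apply Real.sin_pos_of_pos_of_lt_pi (by positivity)
    nlinarith [Real.pi_pos]
  apply ContinuousLinearMap.coe_injective
  apply Module.Basis.ext e.toBasis
  intro k
  have hlk : 0 < lam k := lt_of_lt_of_le hδ (hlam k)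
  simp only [OrthonormalBasis.coe_toBasis, ContinuousLinearMap.coe_coe]
  rw [hAneg k, ContinuousLinearMap.smul_apply, ContinuousLinearMap.integral_apply hInt]
  have hrw : (∫ η in Set.Ioo (0:ℝ) 1, Fn η (e k))
      = ∫ η in Set.Ioo (0:ℝ) 1,
          (((1 - η) ^ (κ - 1) * (1 + (κ * (1 - β) / β - 1) * η)) *
            ((η ^ (1/(1-β)) + (1 - η) ^ (κ/β) * lam k)⁻¹)) • e k := by
    apply setIntegral_congr_fun measurableSet_Ioo
    intro η hη
    rw [hFn_def]
    simp only [ContinuousLinearMap.smul_apply]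
    rw [(hkey η hη).2.1 k, smul_smul]
  rw [hrw, integral_smul_const, scalar_id hβ0 hβ1 hκ hlk, smul_smul]
  congr 1
  field_simp
  ring_nf
  have hsin' : Real.sin (β * Real.pi) ≠ 0 := by rw [mul_comm]; exact hsin.ne'
  exact (mul_inv_cancel₀ hsin').symm
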